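/- Define f : ℝ → ℝ by f(x) := min{0, h(x)} − g(x) + |x|, where g(x) := ∫₀ˣ 2u·sin(1/u) du (integrand understood as 0 at u = 0) and h(x) := x²·sin(1/x) for x ≠ 0, h(0) := 0. Then for every integer k ≥ 1 and every t ∈ (0, π), f is differentiable at the point 1/(2kπ − t) with f′(1/(2kπ − t)) = 1 − cos(t), and consequently f′(1/(2kπ − t)) ≤ t²/2. -/

import Mathlib

open Filter Metric Set Real

noncomputable section

/-- Left derivative `f′₋(x) = d`: `(f y - f x)/(y - x) → d` as `y ↑ x`. -/
def HasLeftDeriv (f : ℝ → ℝ) (x d : ℝ) : Prop :=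
  Filter.Tendsto (fun y : ℝ => (f y - f x) / (y - x)) (nhdsWithin x (Set.Iio x)) (nhds d)

/-- Right derivative `f′₊(x) = d`: `(f y - f x)/(y - x) → d` as `y ↓ x`. -/
def HasRightDeriv (f : ℝ → ℝ) (x d : ℝ) : Prop :=
  Filter.Tendsto (fun y : ℝ => (f y - f x) / (y - x)) (nhdsWithin x (Set.Ioi x)) (nhds d)

/-- `x` is a `δ`-stationary point of `f : ℝ → ℝ`: `f′₋(x) ≤ δ` and `f′₊(x) ≥ -δ`. -/
def IsDeltaStationaryPt1 (f : ℝ → ℝ) (δ x : ℝ) : Prop :=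
  ∃ dm dp : ℝ, HasLeftDeriv f x dm ∧ HasRightDeriv f x dp ∧ dm ≤ δ ∧ -δ ≤ dp

/-- `x` is a stationary point of `f : ℝ → ℝ`: `f′₋(x) ≤ 0` and `f′₊(x) ≥ 0`. -/
def IsStationaryPt1 (f : ℝ → ℝ) (x : ℝ) : Prop :=
  IsDeltaStationaryPt1 f 0 x

/-- `g(x) = ∫₀ˣ 2u sin(1/u) du`, with the integrand extended by `0` at `u = 0`. -/
def gEx (x : ℝ) : ℝ := ∫ u in (0 : ℝ)..x, if u = 0 then 0 else 2 * u * Real.sin (1 / u)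

/-- `h(x) = x² sin(1/x)` for `x ≠ 0`, `h(0) = 0`. -/
def hEx (x : ℝ) : ℝ := if x = 0 then 0 else x ^ 2 * Real.sin (1 / x)

/-- `f(x) = min {0, h(x)} - g(x) + |x|`. -/
def fEx (x : ℝ) : ℝ := min 0 (hEx x) - gEx x + |x|

/-- For every integer `k ≥ 1` and `t ∈ (0, π)`, `f` is differentiable at
`1/(2kπ - t)` with `f′(1/(2kπ - t)) = 1 - cos t`, and `1 - cos t ≤ t²/2`. -/
def Fint (u : ℝ) : ℝ := if u = 0 then 0 else 2 * u * Real.sin (1 / u)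

lemma contF : Continuous Fint := by
  rw [continuous_iff_continuousAt]
  intro x
  rcases eq_or_ne x 0 with rfl | hx
  · have h0 : Fint 0 = 0 := by simp [Fint]
    rw [ContinuousAt, h0]
    have hbd : ∀ u : ℝ, ‖Fint u‖ ≤ 2 * |u| := by
      intro u
      rcases eq_or_ne u 0 with rfl | hu
      · simp [Fint]
      · simp only [Fint, if_neg hu, Real.norm_eq_abs, abs_mul]
        have h1 : |Real.sin (1 / u)| ≤ 1 := Real.abs_sin_le_one _
        calc |2| * |u| * |Real.sin (1/u)| ≤ |2| * |u| * 1 := by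
              apply mul_le_mul_of_nonneg_left h1; positivity
          _ = 2 * |u| := by rw [abs_two]; ring
    have htend : Filter.Tendsto (fun u : ℝ => 2 * |u|) (nhds 0) (nhds 0) := by
      have : Continuous (fun u : ℝ => 2 * |u|) := by continuity
      simpa using this.tendsto 0
    exact squeeze_zero_norm hbd htend
  · have hc : ContinuousAt (fun u : ℝ => 2 * u * Real.sin (1 / u)) x := by
      apply ContinuousAt.mul
      · exact (continuousAt_const.mul continuousAt_id)
      · exact Real.continuous_sin.continuousAt.comp (continuousAt_const.div continuousAt_id hx)
    apply hc.congr
    filter_upwards [isOpen_ne.mem_nhds hx] with u hu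
    simp [Fint, hu]

lemma one_sub_cos_le (t : ℝ) (ht0 : 0 < t) (htp : t < Real.pi) :
    1 - Real.cos t ≤ t ^ 2 / 2 := by
  have h1 : Real.sin (t/2) ≤ t/2 := Real.sin_le (by linarith)
  have h2 : 0 ≤ Real.sin (t/2) :=
    Real.sin_nonneg_of_nonneg_of_le_pi (by linarith) (by nlinarith [Real.pi_pos])
  have h3 : Real.cos t = Real.cos (t/2) ^ 2 - Real.sin (t/2) ^ 2 := by
    have := Real.cos_two_mul' (t/2)
    rwa [show 2 * (t/2) = t by ring] at this
  have h4 : Real.sin (t/2) ^ 2 + Real.cos (t/2) ^ 2 = 1 := Real.sin_sq_add_cos_sq (t/2)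
  nlinarith

theorem fEx_deriv_near_kink :
    ∀ k : ℕ, 1 ≤ k → ∀ t ∈ Set.Ioo (0 : ℝ) Real.pi,
      HasDerivAt fEx (1 - Real.cos t) (1 / (2 * k * Real.pi - t)) ∧
      1 - Real.cos t ≤ t ^ 2 / 2 := by
  intro k hk t ht
  obtain ⟨ht0, htp⟩ := ht
  have hπ := Real.pi_pos
  have hk1 : (1:ℝ) ≤ k := by exact_mod_cast hk
  set c : ℝ := 2 * k * Real.pi - t with hc
  have hcpos : 0 < c := by rw [hc]; nlinarith
  set x₀ : ℝ := 1 / c with hx0def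
  have hx0 : 0 < x₀ := by rw [hx0def]; positivity
  have hx0ne : x₀ ≠ 0 := ne_of_gt hx0
  have hinv : 1 / x₀ = c := by rw [hx0def, one_div_one_div]
  have hshift : c = -t + (k : ℤ) * (2 * Real.pi) := by rw [hc]; push_cast; ring
  have hsin : Real.sin c = -Real.sin t := by
    rw [hshift, Real.sin_add_int_mul_two_pi, Real.sin_neg]
  have hcos : Real.cos c = Real.cos t := by
    rw [hshift, Real.cos_add_int_mul_two_pi, Real.cos_neg]
  have hsint : 0 < Real.sin t := Real.sin_pos_of_pos_of_lt_pi ht0 htp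
  have hsinneg : Real.sin (1 / x₀) < 0 := by rw [hinv, hsin]; linarith
  -- continuity of sin(1/x) at x₀
  have hcsin : ContinuousAt (fun x : ℝ => Real.sin (1 / x)) x₀ :=
    Real.continuous_sin.continuousAt.comp (continuousAt_const.div continuousAt_id hx0ne)
  have h2 : ∀ᶠ x in nhds x₀, Real.sin (1 / x) < 0 :=
    hcsin.eventually_lt_const hsinneg
  have h1 : ∀ᶠ x in nhds x₀, 0 < x := eventually_gt_nhds hx0
  -- derivative of x ↦ x^2 * sin(1/x)
  have hA : HasDerivAt (fun x : ℝ => 1 / x) (-(x₀ ^ 2)⁻¹) x₀ := by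
    simpa [one_div] using hasDerivAt_inv hx0ne
  have hB : HasDerivAt (fun x : ℝ => Real.sin (1 / x))
      (Real.cos (1 / x₀) * (-(x₀ ^ 2)⁻¹)) x₀ :=
    (Real.hasDerivAt_sin (1 / x₀)).comp x₀ hA
  have hH : HasDerivAt (fun x : ℝ => x ^ 2 * Real.sin (1 / x))
      (2 * x₀ * Real.sin (1 / x₀) - Real.cos (1 / x₀)) x₀ := by
    have := (hasDerivAt_pow 2 x₀).mul hB
    refine HasDerivAt.congr_deriv this ?_
    field_simp
    ring
  -- derivative of gEx
  have hGf : gEx = fun x => ∫ u in (0:ℝ)..x, Fint u := rfl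
  have hG : HasDerivAt gEx (2 * x₀ * Real.sin (1 / x₀)) x₀ := by
    rw [hGf]
    have hF : Fint x₀ = 2 * x₀ * Real.sin (1 / x₀) := by simp [Fint, hx0ne]
    rw [← hF]
    exact intervalIntegral.integral_hasDerivAt_right
      (contF.intervalIntegrable 0 x₀)
      ⟨Set.univ, Filter.univ_mem, contF.aestronglyMeasurable.restrict⟩
      contF.continuousAt
  have hφ : HasDerivAt (fun x : ℝ => x ^ 2 * Real.sin (1 / x) - gEx x + x)
      (1 - Real.cos (1 / x₀)) x₀ := by
    have := (hH.sub hG).add (hasDerivAt_id x₀)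
    refine HasDerivAt.congr_deriv this ?_
    ring
  have hev : (fun x : ℝ => x ^ 2 * Real.sin (1 / x) - gEx x + x) =ᶠ[nhds x₀] fEx := by
    filter_upwards [h1, h2] with x hx hsx
    have hxne : x ≠ 0 := ne_of_gt hx
    have hsx' : Real.sin x⁻¹ < 0 := by rwa [one_div] at hsx
    have hle : x ^ 2 * Real.sin x⁻¹ ≤ 0 := by nlinarith [sq_nonneg x]
    simp [fEx, hEx, hxne, abs_of_pos hx, min_eq_right hle, one_div]
  constructor
  · have := hφ.congr_of_eventuallyEq hev.symm
    rw [hinv, hcos] at this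
    exact this
  · exact one_sub_cos_le t ht0 htp
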